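/- In the 32-dimensional pathions (Cayley-Dickson algebra of dimension 32), (i_2 + i_19)(i_4 − i_21) = 0; i.e., the pathions contain zero divisors among Assessor diagonals with inner XOR 17. -/

import Mathlib

/-- The Cayley-Dickson tower of algebras over ℝ: `CD n` has dimension `2^n`. -/
def CD : ℕ → Type
  | 0 => ℝ
  | n+1 => CD n × CD n

noncomputable instance instCDAddCommGroup : (n : ℕ) → AddCommGroup (CD n)
  | 0 => inferInstanceAs (AddCommGroup ℝ)
  | n+1 => @Prod.instAddCommGroup _ _ (instCDAddCommGroup n) (instCDAddCommGroup n)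

/-- Cayley-Dickson conjugation. -/
noncomputable def CD.conj : {n : ℕ} → CD n → CD n
  | 0, x => x
  | _+1, (a, b) => (CD.conj a, -b)

/-- Cayley-Dickson multiplication: `(a,b)(c,d) = (ac − d* b, da + b c*)`. -/
noncomputable def CD.mul : {n : ℕ} → CD n → CD n → CD n
  | 0, x, y => (show ℝ from x) * (show ℝ from y)
  | _+1, (a, b), (c, d) =>
      (CD.mul a c - CD.mul (CD.conj d) b, CD.mul d a + CD.mul b (CD.conj c))

/-- The standard basis unit `i_k` of `CD n`, for `k < 2^n`. -/
noncomputable def CD.e : (n : ℕ) → ℕ → CD n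
  | 0, _ => (1 : ℝ)
  | n+1, k => if k < 2^n then (CD.e n k, 0) else (0, CD.e n (k - 2^n))


noncomputable instance instCDModule : (n : ℕ) → Module ℝ (CD n)
  | 0 => inferInstanceAs (Module ℝ ℝ)
  | n+1 =>
      letI := instCDModule n
      inferInstanceAs (Module ℝ (CD n × CD n))

lemma CD.fst_neg {n : ℕ} (x : CD (n+1)) : (-x).1 = -x.1 := rfl
lemma CD.snd_neg {n : ℕ} (x : CD (n+1)) : (-x).2 = -x.2 := rfl
lemma CD.fst_add {n : ℕ} (x y : CD (n+1)) : (x + y).1 = x.1 + y.1 := rfl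
lemma CD.snd_add {n : ℕ} (x y : CD (n+1)) : (x + y).2 = x.2 + y.2 := rfl
lemma CD.fst_sub {n : ℕ} (x y : CD (n+1)) : (x - y).1 = x.1 - y.1 := rfl
lemma CD.snd_sub {n : ℕ} (x y : CD (n+1)) : (x - y).2 = x.2 - y.2 := rfl
lemma CD.fst_zero {n : ℕ} : (0 : CD (n+1)).1 = 0 := rfl
lemma CD.snd_zero {n : ℕ} : (0 : CD (n+1)).2 = 0 := rfl
lemma CD.ext_iff' {n : ℕ} (x y : CD (n+1)) : x = y ↔ x.1 = y.1 ∧ x.2 = y.2 := Prod.ext_iff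

def CD.mk {n : ℕ} (a b : CD n) : CD (n+1) := (a, b)
lemma CD.add_mk {n : ℕ} (a b c d : CD n) : CD.mk a b + CD.mk c d = CD.mk (a + c) (b + d) := rfl
lemma CD.sub_mk {n : ℕ} (a b c d : CD n) : CD.mk a b - CD.mk c d = CD.mk (a - c) (b - d) := rfl
lemma CD.neg_mk {n : ℕ} (a b : CD n) : -CD.mk a b = CD.mk (-a) (-b) := rfl
lemma CD.zero_mk {n : ℕ} : (0 : CD (n+1)) = CD.mk 0 0 := rfl
lemma CD.mul_mk {n : ℕ} (a b c d : CD n) : CD.mul (CD.mk a b) (CD.mk c d) = CD.mk (CD.mul a c - CD.mul (CD.conj d) b) (CD.mul d a + CD.mul b (CD.conj c)) := rfl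
lemma CD.conj_mk {n : ℕ} (a b : CD n) : CD.conj (CD.mk a b) = CD.mk (CD.conj a) (-b) := rfl
lemma CD.mk_inj {n : ℕ} (a b c d : CD n) : CD.mk a b = CD.mk c d ↔ a = c ∧ b = d := Prod.ext_iff
lemma CD.e_succ (n k : ℕ) : CD.e (n+1) k = if k < 2^n then CD.mk (CD.e n k) 0 else CD.mk 0 (CD.e n (k - 2^n)) := rfl
lemma CD.e_zero_succ (k : ℕ) : CD.e 0 (k+1) = CD.e 0 0 := rfl
lemma CD.mul_zero0 {n : ℕ} (hn : n = 0) (x : CD n) : CD.mul x 0 = 0 := by subst hn; exact mul_zero (show ℝ from x)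
lemma CD.zero_mul0 {n : ℕ} (hn : n = 0) (x : CD n) : CD.mul 0 x = 0 := by subst hn; exact zero_mul (show ℝ from x)
lemma CD.mul_neg0 {n : ℕ} (hn : n = 0) (x y : CD n) : CD.mul x (-y) = -CD.mul x y := by subst hn; exact mul_neg (show ℝ from x) (show ℝ from y)
lemma CD.neg_mul0 {n : ℕ} (hn : n = 0) (x y : CD n) : CD.mul (-x) y = -CD.mul x y := by subst hn; exact neg_mul (show ℝ from x) (show ℝ from y)
lemma CD.mul_e0 {n : ℕ} (hn : n = 0) (a b : ℕ) : CD.mul (CD.e n a) (CD.e n b) = CD.e n 0 := by subst hn; exact mul_one (1 : ℝ)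
lemma CD.conj0 {n : ℕ} (hn : n = 0) (x : CD n) : CD.conj x = x := by subst hn; rfl

/-- The 32-dimensional pathions `CD 5` contain zero divisors:
`(i_2 + i_19)(i_4 − i_21) = 0`. -/
theorem pathion_zero_divisor :
    CD.mul (CD.e 5 2 + CD.e 5 19) (CD.e 5 4 - CD.e 5 21) = 0 := by
  simp only [CD.e_succ, CD.e_zero_succ, Nat.reducePow, Nat.reduceLT, Nat.reduceSub, ite_true, ite_false, CD.add_mk, CD.sub_mk, CD.neg_mk, CD.zero_mk, CD.mul_mk, CD.conj_mk, CD.mk_inj, CD.mul_neg0, CD.neg_mul0, CD.mul_e0, CD.conj0]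
  simp only [add_zero, zero_add, sub_zero, zero_sub, neg_zero, neg_neg, CD.mul_zero0 rfl, CD.zero_mul0 rfl, CD.mul_neg0 rfl, CD.neg_mul0 rfl, CD.mul_e0 rfl]
  simp
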